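/- Let S be a nondecreasing càdlàg process with S(0) = 0 and σ ≥ 0 a random variable independent of S, with distribution function F continuous on [0,∞). For t ≥ 0 define the overshoot θ_t(η) = η(L_t(η)) - t where L_t(η) = inf{u ≥ 0 : η(u) > t}. Then for Ŝ = σ + S and all 0 ≤ t < t+s: P(θ_t(Ŝ) ≥ s) = 1 - F(t+s) + ∫₀^t P(θ_{t-v}(S) ≥ s) dF(v). -/

import Mathlib

open MeasureTheory ProbabilityTheory Set Filter Topology

private lemma overshoot_char (η : ℝ → ℝ) (hmono : Monotone η)
    (hrc : ∀ u : ℝ, ContinuousWithinAt η (Set.Ici u) u) (h0 : η 0 = 0)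
    (r s : ℝ) (hr : 0 ≤ r) (hs : 0 < s) :
    s ≤ η (sInf {u : ℝ | 0 ≤ u ∧ r < η u}) - r ↔
      (∃ q : ℚ, 0 ≤ (q : ℝ) ∧ r < η q) ∧
        (∀ q : ℚ, 0 ≤ (q : ℝ) → η q ≤ r ∨ r + s ≤ η q) := by
  set A := {u : ℝ | 0 ≤ u ∧ r < η u} with hA
  have hbdd : BddBelow A := ⟨0, fun u hu => hu.1⟩
  constructor
  · intro h
    have hne : A.Nonempty := by
      by_contra hne
      rw [Set.not_nonempty_iff_eq_empty] at hne
      rw [hne, Real.sInf_empty, h0] at h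
      linarith
    have hkey : ∀ u : ℝ, 0 ≤ u → r < η u → r + s ≤ η u := by
      intro u hu hru
      have h1 : sInf A ≤ u := csInf_le hbdd ⟨hu, hru⟩
      have := hmono h1
      linarith
    obtain ⟨u, hu0, hur⟩ := hne
    obtain ⟨q, hq⟩ := exists_rat_gt u
    refine ⟨⟨q, by linarith, lt_of_lt_of_le hur (hmono hq.le)⟩, ?_⟩
    intro q hq0
    rcases le_or_gt (η q) r with h' | h'
    · exact Or.inl h'
    · exact Or.inr (hkey q hq0 h')
  · rintro ⟨⟨q, hq0, hqr⟩, hall⟩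
    have hne : A.Nonempty := ⟨q, ⟨hq0, hqr⟩⟩
    have hLmem : sInf A ∈ closure A := csInf_mem_closure hne hbdd
    have hAval : ∀ u ∈ A, r + s ≤ η u := by
      rintro u ⟨hu0, hur⟩
      set T : Set ℝ := {x | u ≤ x ∧ ∃ p : ℚ, (p : ℝ) = x} with hT
      have hTsub : T ⊆ Set.Ici u := fun x hx => hx.1
      have huT : u ∈ closure T := by
        rw [Metric.mem_closure_iff]
        intro ε hε
        obtain ⟨p, hp1, hp2⟩ := exists_rat_btwn (show u < u + ε by linarith)
        refine ⟨p, ⟨hp1.le, p, rfl⟩, ?_⟩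
        rw [Real.dist_eq, abs_sub_comm, abs_sub_lt_iff]
        constructor <;> linarith
      have hcw : ContinuousWithinAt η T u := (hrc u).mono hTsub
      have hmem : η u ∈ closure (η '' T) := hcw.mem_closure_image huT
      have himg : η '' T ⊆ Set.Ici (r + s) := by
        rintro _ ⟨x, ⟨hux, p, rfl⟩, rfl⟩
        rcases hall p (le_trans hu0 hux) with h' | h'
        · exact absurd (lt_of_lt_of_le hur (hmono hux)) (not_lt.2 h')
        · exact h'
      exact closure_minimal himg isClosed_Ici hmem
    have hAsub : A ⊆ Set.Ici (sInf A) := fun u hu => csInf_le hbdd hu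
    have hcw : ContinuousWithinAt η A (sInf A) := ((hrc (sInf A)).mono hAsub)
    have hmem : η (sInf A) ∈ closure (η '' A) := hcw.mem_closure_image hLmem
    have himg : η '' A ⊆ Set.Ici (r + s) := by
      rintro _ ⟨x, hx, rfl⟩; exact hAval x hx
    have hfin : r + s ≤ η (sInf A) := closure_minimal himg isClosed_Ici hmem
    linarith

private lemma delay_shift_set (η : ℝ → ℝ) (v t : ℝ) :
    {u : ℝ | 0 ≤ u ∧ t < v + η u} = {u : ℝ | 0 ≤ u ∧ t - v < η u} := by
  ext u
  constructor <;> rintro ⟨h1, h2⟩ <;> exact ⟨h1, by linarith⟩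

private lemma delay_big_sInf (η : ℝ → ℝ) (h0 : η 0 = 0) (v t : ℝ) (hv : t < v) :
    sInf {u : ℝ | 0 ≤ u ∧ t < v + η u} = 0 := by
  have hmem : (0:ℝ) ∈ {u : ℝ | 0 ≤ u ∧ t < v + η u} := ⟨le_refl 0, by rw [h0]; linarith⟩
  exact le_antisymm (csInf_le ⟨0, fun u hu => hu.1⟩ hmem)
    (le_csInf ⟨0, hmem⟩ fun u hu => hu.1)

private def Cset (t s v : ℝ) : Set (ℝ → ℝ) :=
  {η | (∃ q : ℚ, 0 ≤ (q : ℝ) ∧ t - v < η q) ∧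
      (∀ q : ℚ, 0 ≤ (q : ℝ) → η q ≤ t - v ∨ t - v + s ≤ η q)}

private def Qset (t s : ℝ) : Set (ℝ × (ℝ → ℝ)) :=
  {p | p.1 ≤ t ∧ p.2 ∈ Cset t s p.1}

private lemma Cset_meas (t s v : ℝ) : MeasurableSet (Cset t s v) := by
  have he : ∀ q : ℚ, Measurable fun η : ℝ → ℝ => η (q : ℝ) :=
    fun q => measurable_pi_apply (q : ℝ)
  have h2 : MeasurableSet {η : ℝ → ℝ | ∃ q : ℚ, 0 ≤ (q : ℝ) ∧ t - v < η q} := by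
    have heq : {η : ℝ → ℝ | ∃ q : ℚ, 0 ≤ (q : ℝ) ∧ t - v < η q}
        = ⋃ q : ℚ, {η : ℝ → ℝ | 0 ≤ (q : ℝ) ∧ t - v < η q} := by
      ext η; simp [Set.mem_iUnion]
    rw [heq]
    refine MeasurableSet.iUnion fun q => ?_
    by_cases hq : 0 ≤ (q : ℝ)
    · simp only [hq, true_and]
      exact measurableSet_lt measurable_const (he q)
    · simp only [hq, false_and, Set.setOf_false]
      exact MeasurableSet.empty
  have h3 : MeasurableSet {η : ℝ → ℝ | ∀ q : ℚ, 0 ≤ (q : ℝ) → η q ≤ t - v ∨ t - v + s ≤ η q} := by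
    have heq : {η : ℝ → ℝ | ∀ q : ℚ, 0 ≤ (q : ℝ) → η q ≤ t - v ∨ t - v + s ≤ η q}
        = ⋂ q : ℚ, {η : ℝ → ℝ | 0 ≤ (q : ℝ) → η q ≤ t - v ∨ t - v + s ≤ η q} := by
      ext η; simp [Set.mem_iInter]
    rw [heq]
    refine MeasurableSet.iInter fun q => ?_
    by_cases hq : 0 ≤ (q : ℝ)
    · simp only [hq, true_implies]
      exact (measurableSet_le (he q) measurable_const).union
        (measurableSet_le measurable_const (he q))
    · simp only [hq, false_implies, Set.setOf_true]
      exact MeasurableSet.univ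
  exact h2.inter h3

private lemma Qset_meas (t s : ℝ) : MeasurableSet (Qset t s) := by
  have he : ∀ q : ℚ, Measurable fun p : ℝ × (ℝ → ℝ) => p.2 (q : ℝ) :=
    fun q => (measurable_pi_apply (q : ℝ)).comp measurable_snd
  have h1 : MeasurableSet {p : ℝ × (ℝ → ℝ) | p.1 ≤ t} :=
    measurableSet_le measurable_fst measurable_const
  have h2 : MeasurableSet {p : ℝ × (ℝ → ℝ) | ∃ q : ℚ, 0 ≤ (q : ℝ) ∧ t - p.1 < p.2 q} := by
    have heq : {p : ℝ × (ℝ → ℝ) | ∃ q : ℚ, 0 ≤ (q : ℝ) ∧ t - p.1 < p.2 q}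
        = ⋃ q : ℚ, {p : ℝ × (ℝ → ℝ) | 0 ≤ (q : ℝ) ∧ t - p.1 < p.2 q} := by
      ext p; simp [Set.mem_iUnion]
    rw [heq]
    refine MeasurableSet.iUnion fun q => ?_
    by_cases hq : 0 ≤ (q : ℝ)
    · simp only [hq, true_and]
      exact measurableSet_lt (measurable_const.sub measurable_fst) (he q)
    · simp only [hq, false_and, Set.setOf_false]
      exact MeasurableSet.empty
  have h3 : MeasurableSet
      {p : ℝ × (ℝ → ℝ) | ∀ q : ℚ, 0 ≤ (q : ℝ) → p.2 q ≤ t - p.1 ∨ t - p.1 + s ≤ p.2 q} := by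
    have heq : {p : ℝ × (ℝ → ℝ) | ∀ q : ℚ, 0 ≤ (q : ℝ) → p.2 q ≤ t - p.1 ∨ t - p.1 + s ≤ p.2 q}
        = ⋂ q : ℚ, {p : ℝ × (ℝ → ℝ) | 0 ≤ (q : ℝ) → p.2 q ≤ t - p.1 ∨ t - p.1 + s ≤ p.2 q} := by
      ext p; simp [Set.mem_iInter]
    rw [heq]
    refine MeasurableSet.iInter fun q => ?_
    by_cases hq : 0 ≤ (q : ℝ)
    · simp only [hq, true_implies]
      exact (measurableSet_le (he q) (measurable_const.sub measurable_fst)).union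
        (measurableSet_le ((measurable_const.sub measurable_fst).add measurable_const) (he q))
    · simp only [hq, false_implies, Set.setOf_true]
      exact MeasurableSet.univ
  have hQeq : Qset t s = {p : ℝ × (ℝ → ℝ) | p.1 ≤ t}
      ∩ ({p : ℝ × (ℝ → ℝ) | ∃ q : ℚ, 0 ≤ (q : ℝ) ∧ t - p.1 < p.2 q}
        ∩ {p : ℝ × (ℝ → ℝ) | ∀ q : ℚ, 0 ≤ (q : ℝ) → p.2 q ≤ t - p.1 ∨ t - p.1 + s ≤ p.2 q}) := by
    ext p
    simp only [Qset, Cset, Set.mem_inter_iff, Set.mem_setOf_eq]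
  rw [hQeq]
  exact h1.inter (h2.inter h3)

private lemma Qset_section (t s v : ℝ) :
    Prod.mk v ⁻¹' Qset t s = if v ≤ t then Cset t s v else ∅ := by
  by_cases hv : v ≤ t
  · ext η; simp [Qset, hv]
  · ext η; simp [Qset, hv]

/-- Overshoot decomposition for a delayed subordinator: let `S` be a nondecreasing
right-continuous process with `S(0) = 0` and `σ ≥ 0` a random delay independent of
`S`, with continuous distribution function `F` on `[0,∞)`. For the overshoot
`θ_t(η) = η(L_t(η)) - t`, `L_t(η) = inf{u ≥ 0 : η(u) > t}`, and `Ŝ = σ + S`, one has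
for all `0 ≤ t < t+s`:
`P(θ_t(Ŝ) ≥ s) = 1 - F(t+s) + ∫₀^t P(θ_{t-v}(S) ≥ s) dF(v)`. -/
theorem delayed_overshoot_decomposition {Ω : Type*} [MeasureSpace Ω]
    [IsProbabilityMeasure (ℙ : Measure Ω)]
    (S : Ω → ℝ → ℝ) (σ : Ω → ℝ) (F : ℝ → ℝ)
    (hSmeas : Measurable S) (hσmeas : Measurable σ)
    (hS0 : ∀ ω, S ω 0 = 0) (hSmono : ∀ ω, Monotone (S ω))
    (hSrightcont : ∀ ω, ∀ u : ℝ, ContinuousWithinAt (S ω) (Set.Ici u) u)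
    (hσ0 : ∀ ω, 0 ≤ σ ω)
    (hindep : IndepFun σ S ℙ)
    (hF : ∀ v : ℝ, F v = (ℙ {ω : Ω | σ ω ≤ v}).toReal)
    (hFcont : ContinuousOn F (Set.Ici 0))
    (θ : ℝ → (ℝ → ℝ) → ℝ)
    (hθ : ∀ (t : ℝ) (η : ℝ → ℝ), θ t η = η (sInf {u : ℝ | 0 ≤ u ∧ t < η u}) - t)
    (t s : ℝ) (ht : 0 ≤ t) (hs : 0 < s) :
    (ℙ {ω : Ω | s ≤ θ t (fun u => σ ω + S ω u)}).toReal
      = 1 - F (t + s) +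
        ∫ v in Set.Icc (0:ℝ) t, (ℙ {ω : Ω | s ≤ θ (t - v) (S ω)}).toReal
          ∂(Measure.map σ ℙ) := by
  have hts : 0 < t + s := by linarith
  -- the set decomposition
  have hGset : {ω : Ω | s ≤ θ t (fun u => σ ω + S ω u)}
      = σ ⁻¹' (Set.Ici (t + s)) ∪ (fun ω => (σ ω, S ω)) ⁻¹' Qset t s := by
    ext ω
    simp only [Set.mem_setOf_eq, Set.mem_union, Set.mem_preimage, Set.mem_Ici,
      Qset, Cset]
    rw [hθ]
    rcases le_or_gt (σ ω) t with hv | hv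
    · have harr : (fun u => σ ω + S ω u) (sInf {u : ℝ | 0 ≤ u ∧ t < (fun u => σ ω + S ω u) u}) - t
          = S ω (sInf {u : ℝ | 0 ≤ u ∧ t - σ ω < S ω u}) - (t - σ ω) := by
        simp only
        rw [delay_shift_set]
        ring
      rw [harr, overshoot_char (S ω) (hSmono ω) (hSrightcont ω) (hS0 ω)
        (t - σ ω) s (by linarith) hs]
      constructor
      · exact fun h => Or.inr ⟨hv, h⟩
      · rintro (h | ⟨_, h⟩)
        · exact absurd (le_trans h hv) (by linarith)
        · exact h
    · have hsinf : sInf {u : ℝ | 0 ≤ u ∧ t < (fun u => σ ω + S ω u) u} = 0 := by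
        simpa using delay_big_sInf (S ω) (hS0 ω) (σ ω) t hv
      rw [hsinf]
      simp only [hS0 ω, add_zero]
      constructor
      · intro h
        exact Or.inl (by linarith)
      · rintro (h | ⟨h1, _⟩)
        · linarith
        · linarith
  have hpre1 : MeasurableSet (σ ⁻¹' (Set.Ici (t + s))) := hσmeas measurableSet_Ici
  have hpre2 : MeasurableSet ((fun ω => (σ ω, S ω)) ⁻¹' Qset t s) :=
    (hσmeas.prodMk hSmeas) (Qset_meas t s)
  have hdisj : Disjoint (σ ⁻¹' (Set.Ici (t + s))) ((fun ω => (σ ω, S ω)) ⁻¹' Qset t s) := by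
    rw [Set.disjoint_left]
    rintro ω h1 h2
    have h2' : σ ω ≤ t := h2.1
    have h1' : t + s ≤ σ ω := h1
    linarith
  -- atom at t + s is null
  have hatom : ℙ (σ ⁻¹' {t + s}) = 0 := by
    have hl : (𝓝[<] (t + s)).NeBot := nhdsLT_neBot (t + s)
    have hFt : Tendsto F (𝓝[<] (t + s)) (𝓝 (F (t + s))) := by
      have h1 : 𝓝[Set.Iio (t + s)] (t + s) = 𝓝[Set.Iio (t + s) ∩ Set.Ioi 0] (t + s) :=
        nhdsWithin_restrict' _ (Ioi_mem_nhds hts)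
      have h2 : 𝓝[Set.Iio (t + s) ∩ Set.Ioi 0] (t + s) ≤ 𝓝[Set.Ici 0] (t + s) :=
        nhdsWithin_mono _ (fun x hx => Set.mem_Ici.2 (le_of_lt hx.2))
      have h3 : Tendsto F (𝓝[Set.Ici 0] (t + s)) (𝓝 (F (t + s))) :=
        hFcont (t + s) hts.le
      exact (h3.mono_left (h1 ▸ h2 : 𝓝[Set.Iio (t + s)] (t + s) ≤ 𝓝[Set.Ici 0] (t + s)))
    have hbound : ∀ a : ℝ, a < t + s →
        (ℙ (σ ⁻¹' {t + s})).toReal ≤ F (t + s) - F a := by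
      intro a ha
      have hdis : Disjoint (σ ⁻¹' {t + s}) (σ ⁻¹' (Set.Iic a)) := by
        rw [Set.disjoint_left]
        rintro ω h1 h2
        have h1' : σ ω = t + s := h1
        have h2' : σ ω ≤ a := h2
        linarith
      have hsub : σ ⁻¹' {t + s} ∪ σ ⁻¹' (Set.Iic a) ⊆ σ ⁻¹' (Set.Iic (t + s)) := by
        rintro ω (h | h)
        · exact le_of_eq h
        · exact le_trans h ha.le
      have hun : ℙ (σ ⁻¹' {t + s} ∪ σ ⁻¹' (Set.Iic a))
          = ℙ (σ ⁻¹' {t + s}) + ℙ (σ ⁻¹' (Set.Iic a)) :=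
        measure_union hdis (hσmeas measurableSet_Iic)
      have hle : ℙ (σ ⁻¹' {t + s}) + ℙ (σ ⁻¹' (Set.Iic a)) ≤ ℙ (σ ⁻¹' (Set.Iic (t + s))) := by
        rw [← hun]; exact measure_mono hsub
      have hle' := ENNReal.toReal_mono (measure_ne_top _ _) hle
      rw [ENNReal.toReal_add (measure_ne_top _ _) (measure_ne_top _ _)] at hle'
      have ha' : F a = (ℙ (σ ⁻¹' (Set.Iic a))).toReal := hF a
      have hts' : F (t + s) = (ℙ (σ ⁻¹' (Set.Iic (t + s)))).toReal := hF (t + s)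
      rw [← ha'] at hle'
      rw [← hts'] at hle'
      linarith
    have hlim : Tendsto (fun a => F (t + s) - F a) (𝓝[<] (t + s)) (𝓝 (F (t + s) - F (t + s))) :=
      tendsto_const_nhds.sub hFt
    have hev : ∀ᶠ a in 𝓝[<] (t + s), (ℙ (σ ⁻¹' {t + s})).toReal ≤ F (t + s) - F a := by
      filter_upwards [self_mem_nhdsWithin] with a ha
      exact hbound a ha
    have hle0 : (ℙ (σ ⁻¹' {t + s})).toReal ≤ 0 := by
      have := ge_of_tendsto hlim hev
      linarith
    have := ENNReal.toReal_eq_zero_iff (ℙ (σ ⁻¹' {t + s}))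
    have h0 : (ℙ (σ ⁻¹' {t + s})).toReal = 0 :=
      le_antisymm hle0 ENNReal.toReal_nonneg
    rcases (ENNReal.toReal_eq_zero_iff _).1 h0 with h | h
    · exact h
    · exact absurd h (measure_ne_top _ _)
  -- part 1
  have hpart1 : (ℙ (σ ⁻¹' (Set.Ici (t + s)))).toReal = 1 - F (t + s) := by
    have hcompl : σ ⁻¹' (Set.Ici (t + s)) = (σ ⁻¹' (Set.Iio (t + s)))ᶜ := by
      ext ω; simp [not_lt]
    have hIic : ℙ (σ ⁻¹' (Set.Iic (t + s))) = ℙ (σ ⁻¹' (Set.Iio (t + s))) := by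
      have : σ ⁻¹' (Set.Iic (t + s)) = σ ⁻¹' (Set.Iio (t + s)) ∪ σ ⁻¹' {t + s} := by
        ext ω
        simp only [Set.mem_preimage, Set.mem_Iic, Set.mem_union, Set.mem_Iio,
          Set.mem_singleton_iff]
        constructor
        · intro h; rcases lt_or_eq_of_le h with h' | h'
          · exact Or.inl h'
          · exact Or.inr h'
        · rintro (h | h)
          · exact h.le
          · exact h.le
      rw [this]
      refine le_antisymm (le_trans (measure_union_le _ _) ?_) (measure_mono Set.subset_union_left)
      rw [hatom, add_zero]
    rw [hcompl, prob_compl_eq_one_sub (hσmeas measurableSet_Iio), ← hIic,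
      ENNReal.toReal_sub_of_le prob_le_one ENNReal.one_ne_top]
    rw [hF (t + s)]
    norm_num
    rfl
  -- part 2
  have hνprob : IsProbabilityMeasure (Measure.map S ℙ) :=
    Measure.isProbabilityMeasure_map hSmeas.aemeasurable
  have hmap : Measure.map (fun ω => (σ ω, S ω)) ℙ
      = (Measure.map σ ℙ).prod (Measure.map S ℙ) :=
    (indepFun_iff_map_prod_eq_prod_map_map hσmeas.aemeasurable hSmeas.aemeasurable).1 hindep
  have hp2 : ℙ ((fun ω => (σ ω, S ω)) ⁻¹' Qset t s)
      = ∫⁻ v, Measure.map S ℙ (Prod.mk v ⁻¹' Qset t s) ∂(Measure.map σ ℙ) := by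
    rw [← Measure.map_apply (hσmeas.prodMk hSmeas) (Qset_meas t s), hmap,
      Measure.prod_apply (Qset_meas t s)]
  have hsecmeas : Measurable fun v => Measure.map S ℙ (Prod.mk v ⁻¹' Qset t s) :=
    measurable_measure_prodMk_left (Qset_meas t s)
  have hμneg : Measure.map σ ℙ (Set.Iio 0) = 0 := by
    rw [Measure.map_apply hσmeas measurableSet_Iio]
    have hempty : σ ⁻¹' Set.Iio 0 = ∅ := by
      ext ω
      simp only [Set.mem_preimage, Set.mem_Iio, Set.mem_empty_iff_false, iff_false, not_lt]
      exact hσ0 ω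
    rw [hempty, measure_empty]
  have hIicIcc : (Set.Iic t : Set ℝ) =ᵐ[Measure.map σ ℙ] (Set.Icc 0 t : Set ℝ) := by
    rw [MeasureTheory.ae_eq_set]
    constructor
    · refine measure_mono_null ?_ hμneg
      intro v hv
      simp only [Set.mem_diff, Set.mem_Iic, Set.mem_Icc, not_and, not_le] at hv
      simp only [Set.mem_Iio]
      by_contra h
      push_neg at h
      exact absurd (hv.2 h) (not_lt.2 hv.1)
    · have hemp : Set.Icc (0:ℝ) t \ Set.Iic t = ∅ := by
        ext v
        simp only [Set.mem_diff, Set.mem_Icc, Set.mem_Iic, Set.mem_empty_iff_false,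
          iff_false, not_and, not_not]
        exact fun h1 => h1.2
      rw [hemp, measure_empty]
  have hchain : ℙ ((fun ω => (σ ω, S ω)) ⁻¹' Qset t s)
      = ∫⁻ v in Set.Icc (0:ℝ) t, Measure.map S ℙ (Cset t s v) ∂(Measure.map σ ℙ) := by
    rw [hp2]
    have hind : (fun v => Measure.map S ℙ (Prod.mk v ⁻¹' Qset t s))
        = (Set.Iic t).indicator (fun v => Measure.map S ℙ (Cset t s v)) := by
      funext v
      rw [Qset_section]
      by_cases hv : v ≤ t
      · simp [Set.indicator, hv]
      · simp [Set.indicator, hv]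
    rw [hind, lintegral_indicator measurableSet_Iic, setLIntegral_congr hIicIcc]
  -- the Bochner integral equals the lintegral
  have hCeq : ∀ v ∈ Set.Icc (0:ℝ) t,
      {ω : Ω | s ≤ θ (t - v) (S ω)} = S ⁻¹' Cset t s v := by
    intro v hv
    ext ω
    simp only [Set.mem_setOf_eq, Set.mem_preimage, Cset]
    rw [hθ]
    exact overshoot_char (S ω) (hSmono ω) (hSrightcont ω) (hS0 ω) (t - v) s
      (by linarith [hv.2]) hs
  have hPeq : Set.EqOn (fun v => (ℙ {ω : Ω | s ≤ θ (t - v) (S ω)}).toReal)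
      (fun v => (Measure.map S ℙ (Cset t s v)).toReal) (Set.Icc (0:ℝ) t) := by
    intro v hv
    simp only
    rw [hCeq v hv, Measure.map_apply hSmeas (Cset_meas t s v)]
  have hint : (∫ v in Set.Icc (0:ℝ) t, (ℙ {ω : Ω | s ≤ θ (t - v) (S ω)}).toReal
        ∂(Measure.map σ ℙ))
      = (∫⁻ v in Set.Icc (0:ℝ) t, Measure.map S ℙ (Cset t s v) ∂(Measure.map σ ℙ)).toReal := by
    rw [setIntegral_congr_fun measurableSet_Icc hPeq]
    rw [integral_toReal]
    · refine AEMeasurable.congr hsecmeas.aemeasurable.restrict ?_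
      filter_upwards [ae_restrict_mem measurableSet_Icc] with v hv
      rw [Qset_section]
      simp [hv.2]
    · filter_upwards with v
      exact measure_lt_top _ _
  -- assemble
  rw [hGset, measure_union hdisj hpre2,
    ENNReal.toReal_add (measure_ne_top _ _) (measure_ne_top _ _), hpart1, hint, hchain]
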